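/- Let λ'_1 ≥ … ≥ λ'_p ≥ 0 be the eigenvalues of Q M Q. Then λ'_j = 0 for all j > p − r, and for every m with 0 ≤ m ≤ p − r the minimum of Σ_{y=1}^h w_y ‖Q z_y − B C_y‖² over all real p×m matrices B with Bᵀ B = I_m and Q B = B and all C : Fin h → ℝ^m equals Σ_{j=m+1}^{p−r} λ'_j; the minimum is attained by C_y = Bᵀ Q z_y with the columns of B equal to unit eigenvectors of Q M Q corresponding to λ'_1, …, λ'_m. -/

import Mathlib

open Matrix

variable {p m h : ℕ}

lemma trace_vecMulVec' (x y : Fin p → ℝ) : trace (vecMulVec x y) = x ⬝ᵥ y := by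
  simp [trace, vecMulVec_apply, dotProduct, Matrix.diag]

lemma conj_vecMulVec (A : Matrix (Fin p) (Fin m) ℝ) (x y : Fin p → ℝ) :
    Aᵀ * vecMulVec x y * A = vecMulVec (Aᵀ *ᵥ x) (Aᵀ *ᵥ y) := by
  rw [vecMulVec_eq (ι := Unit), vecMulVec_eq (ι := Unit), replicateCol_mulVec,
    mulVec_transpose, replicateRow_vecMul]
  simp only [Matrix.mul_assoc]

lemma vecMulVec_mulVec_conj (Q : Matrix (Fin p) (Fin p) ℝ) (x y : Fin p → ℝ) :
    vecMulVec (Q *ᵥ x) (Q *ᵥ y) = Q * vecMulVec x y * Qᵀ := by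
  have := conj_vecMulVec Qᵀ x y
  simpa using this.symm

lemma quad_trace (w : Fin h → ℝ) (u : Fin h → Fin p → ℝ) (B : Matrix (Fin p) (Fin m) ℝ) :
    ∑ y, w y * ((Bᵀ *ᵥ u y) ⬝ᵥ (Bᵀ *ᵥ u y))
      = trace (Bᵀ * (∑ y, w y • vecMulVec (u y) (u y)) * B) := by
  rw [Matrix.mul_sum, Matrix.sum_mul, trace_sum]
  apply Finset.sum_congr rfl; intro y _
  rw [Matrix.mul_smul, Matrix.smul_mul, trace_smul, conj_vecMulVec, trace_vecMulVec']
  simp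

lemma pyth (B : Matrix (Fin p) (Fin m) ℝ) (hB : Bᵀ * B = 1) (u : Fin p → ℝ) (c : Fin m → ℝ) :
    ∑ j, (u j - (B *ᵥ c) j) ^ 2
      = (u ⬝ᵥ u - (Bᵀ *ᵥ u) ⬝ᵥ (Bᵀ *ᵥ u))
        + ((Bᵀ *ᵥ u) - c) ⬝ᵥ ((Bᵀ *ᵥ u) - c) := by
  have h1 : ∑ j, (u j - (B *ᵥ c) j) ^ 2 = (u - B *ᵥ c) ⬝ᵥ (u - B *ᵥ c) := by
    simp [dotProduct, Pi.sub_apply, sq]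
  have e1 : u ⬝ᵥ (B *ᵥ c) = (Bᵀ *ᵥ u) ⬝ᵥ c := by
    rw [dotProduct_mulVec, ← mulVec_transpose]
  have e2 : (B *ᵥ c) ⬝ᵥ (B *ᵥ c) = c ⬝ᵥ c := by
    rw [dotProduct_mulVec, vecMul_mulVec, hB, vecMul_one]
  rw [h1]
  simp only [dotProduct_sub, sub_dotProduct]
  rw [e2, dotProduct_comm (B *ᵥ c) u, e1, dotProduct_comm c (Bᵀ *ᵥ u)]
  ring

lemma filter_lt_eq_map {p m : ℕ} (hm : m ≤ p) :
    (Finset.univ.filter fun j : Fin p => (j : ℕ) < m)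
      = Finset.map ⟨Fin.castLE hm, Fin.castLE_injective hm⟩ Finset.univ := by
  ext j
  simp only [Finset.mem_filter, Finset.mem_map, Finset.mem_univ, true_and,
    Function.Embedding.coeFn_mk]
  constructor
  · intro hj; exact ⟨⟨j, hj⟩, by ext; rfl⟩
  · rintro ⟨i, rfl⟩; exact i.isLt

lemma filter_lt_card {p m : ℕ} (hm : m ≤ p) :
    (Finset.univ.filter fun j : Fin p => (j : ℕ) < m).card = m := by
  rw [filter_lt_eq_map hm, Finset.card_map, Finset.card_univ, Fintype.card_fin]

lemma kyFan {p m : ℕ} (hm : m ≤ p) (lam : Fin p → ℝ) (hlam : Antitone lam)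
    (hpos : ∀ j, 0 ≤ lam j)
    (V : Matrix (Fin p) (Fin p) ℝ) (hV : Vᵀ * V = 1)
    (B : Matrix (Fin p) (Fin m) ℝ) (hB : Bᵀ * B = 1) :
    trace (Bᵀ * (V * diagonal lam * Vᵀ) * B)
      ≤ ∑ j ∈ Finset.univ.filter (fun j : Fin p => (j : ℕ) < m), lam j := by
  have hVV : V * Vᵀ = 1 := mul_eq_one_comm.mp hV
  set G : Matrix (Fin p) (Fin m) ℝ := Vᵀ * B with hGdef
  have hG : Gᵀ * G = 1 := by
    rw [hGdef, transpose_mul, transpose_transpose, Matrix.mul_assoc,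
      ← Matrix.mul_assoc V, hVV, Matrix.one_mul, hB]
  have hBM : Bᵀ * (V * diagonal lam * Vᵀ) * B = Gᵀ * (diagonal lam * G) := by
    rw [hGdef, transpose_mul, transpose_transpose]
    simp only [Matrix.mul_assoc]
  set s : Fin p → ℝ := fun j => ∑ i, G j i ^ 2 with hsdef
  have hform : trace (Gᵀ * (diagonal lam * G)) = ∑ j, lam j * s j := by
    rw [Matrix.trace]
    simp only [diag_apply, mul_apply, transpose_apply, diagonal_apply, ite_mul, zero_mul,
      Finset.sum_ite_eq, Finset.mem_univ, if_true]
    rw [Finset.sum_comm]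
    refine Finset.sum_congr rfl fun j _ => ?_
    rw [Finset.mul_sum]
    refine Finset.sum_congr rfl fun i _ => by ring
  have hs0 : ∀ j, 0 ≤ s j := fun j => Finset.sum_nonneg fun i _ => sq_nonneg _
  have hsym : (G * Gᵀ)ᵀ = G * Gᵀ := by rw [transpose_mul, transpose_transpose]
  have hsP : ∀ j, s j = (G * Gᵀ) j j := by
    intro j; rw [mul_apply]; exact Finset.sum_congr rfl fun i _ => by rw [transpose_apply, sq]
  have hsum : ∑ j, s j = (m : ℝ) := by
    have : ∀ i : Fin m, (Gᵀ * G) i i = ∑ j, G j i ^ 2 := by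
      intro i; rw [mul_apply]
      exact Finset.sum_congr rfl fun j _ => by rw [transpose_apply, sq]
    calc ∑ j, s j = ∑ j, ∑ i, G j i ^ 2 := rfl
      _ = ∑ i, ∑ j, G j i ^ 2 := Finset.sum_comm
      _ = ∑ i : Fin m, (Gᵀ * G) i i := by
          exact Finset.sum_congr rfl fun i _ => (this i).symm
      _ = trace (Gᵀ * G) := rfl
      _ = (m : ℝ) := by rw [hG, trace_one]; simp
  have hs1 : ∀ j, s j ≤ 1 := by
    intro j
    have hPP : (G * Gᵀ) * (G * Gᵀ) = G * Gᵀ := by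
      rw [Matrix.mul_assoc, ← Matrix.mul_assoc Gᵀ, hG, Matrix.one_mul]
    have h2 : (G * Gᵀ) j j = ∑ k, ((G * Gᵀ) j k) ^ 2 := by
      conv_lhs => rw [← hPP]
      rw [mul_apply]
      refine Finset.sum_congr rfl fun k _ => ?_
      have hjk : (G * Gᵀ) k j = (G * Gᵀ) j k := by
        conv_lhs => rw [← hsym]
        rw [transpose_apply]
      rw [hjk, sq]
    have hub : ((G * Gᵀ) j j) ^ 2 ≤ (G * Gᵀ) j j := by
      conv_rhs => rw [h2]
      exact Finset.single_le_sum (f := fun k => ((G * Gᵀ) j k) ^ 2)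
        (fun k _ => sq_nonneg _) (Finset.mem_univ j)
    nlinarith [hs0 j, hsP j]
  -- threshold
  set t : ℝ := if h : m < p then lam ⟨m, h⟩ else 0 with htdef
  have ht_le : ∀ j : Fin p, (j : ℕ) < m → t ≤ lam j := by
    intro j hj
    by_cases h : m < p
    · rw [htdef, dif_pos h]
      exact hlam (by exact Fin.le_def.mpr (le_of_lt hj))
    · rw [htdef, dif_neg h]; exact hpos j
  have ht_ge : ∀ j : Fin p, m ≤ (j : ℕ) → lam j ≤ t := by
    intro j hj
    have h : m < p := lt_of_le_of_lt hj j.isLt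
    rw [htdef, dif_pos h]
    exact hlam (Fin.le_def.mpr hj)
  rw [hBM, hform]
  rw [← Finset.sum_filter_add_sum_filter_not Finset.univ (fun j : Fin p => (j : ℕ) < m)
    (fun j => lam j * s j)]
  have h1 : ∑ j ∈ Finset.univ.filter (fun j : Fin p => (j : ℕ) < m), lam j * s j
      ≤ ∑ j ∈ Finset.univ.filter (fun j : Fin p => (j : ℕ) < m), (lam j + (t * s j - t)) := by
    refine Finset.sum_le_sum fun j hj => ?_
    have hj' := (Finset.mem_filter.mp hj).2
    nlinarith [ht_le j hj', hs1 j, hs0 j]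
  have h2 : ∑ j ∈ Finset.univ.filter (fun j : Fin p => ¬ (j : ℕ) < m), lam j * s j
      ≤ ∑ j ∈ Finset.univ.filter (fun j : Fin p => ¬ (j : ℕ) < m), t * s j := by
    refine Finset.sum_le_sum fun j hj => ?_
    have hj' := Nat.le_of_not_lt (Finset.mem_filter.mp hj).2
    nlinarith [ht_ge j hj', hs0 j]
  have hcard : ((Finset.univ.filter fun j : Fin p => (j : ℕ) < m).card : ℝ) = (m : ℝ) := by
    rw [filter_lt_card hm]
  have hsplit : ∑ j ∈ Finset.univ.filter (fun j : Fin p => (j : ℕ) < m), s j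
      + ∑ j ∈ Finset.univ.filter (fun j : Fin p => ¬ (j : ℕ) < m), s j = (m : ℝ) := by
    rw [Finset.sum_filter_add_sum_filter_not]; exact hsum
  calc ∑ j ∈ Finset.univ.filter (fun j : Fin p => (j : ℕ) < m), lam j * s j
        + ∑ j ∈ Finset.univ.filter (fun j : Fin p => ¬ (j : ℕ) < m), lam j * s j
      ≤ (∑ j ∈ Finset.univ.filter (fun j : Fin p => (j : ℕ) < m), (lam j + (t * s j - t)))
        + ∑ j ∈ Finset.univ.filter (fun j : Fin p => ¬ (j : ℕ) < m), t * s j :=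
        add_le_add h1 h2
    _ = ∑ j ∈ Finset.univ.filter (fun j : Fin p => (j : ℕ) < m), lam j
        + t * ((∑ j ∈ Finset.univ.filter (fun j : Fin p => (j : ℕ) < m), s j
          + ∑ j ∈ Finset.univ.filter (fun j : Fin p => ¬ (j : ℕ) < m), s j) - (m : ℝ)) := by
        simp only [mul_sub, mul_add, Finset.mul_sum, Finset.sum_add_distrib,
          Finset.sum_sub_distrib, Finset.sum_const, nsmul_eq_mul, hcard]
        ring
    _ = ∑ j ∈ Finset.univ.filter (fun j : Fin p => (j : ℕ) < m), lam j := by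
        rw [hsplit]; ring

lemma conjT_eq_transpose {A : Matrix (Fin p) (Fin p) ℝ} : Aᴴ = Aᵀ := by
  ext i j; simp [conjTranspose_apply]

lemma rank_le_of_ker_le (A B : Matrix (Fin p) (Fin p) ℝ)
    (hk : LinearMap.ker A.mulVecLin ≤ LinearMap.ker B.mulVecLin) : B.rank ≤ A.rank := by
  have hA := LinearMap.finrank_range_add_finrank_ker A.mulVecLin
  have hB := LinearMap.finrank_range_add_finrank_ker B.mulVecLin
  have hmono := Submodule.finrank_mono hk
  have hra : A.rank = Module.finrank ℝ (LinearMap.range A.mulVecLin) := rfl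
  have hrb : B.rank = Module.finrank ℝ (LinearMap.range B.mulVecLin) := rfl
  omega

lemma sum_split {a b : ℕ} (hab : a ≤ b) (f : Fin p → ℝ) :
    ∑ j ∈ Finset.univ.filter (fun j : Fin p => (j : ℕ) < b), f j
      = (∑ j ∈ Finset.univ.filter (fun j : Fin p => (j : ℕ) < a), f j)
        + ∑ j ∈ Finset.univ.filter (fun j : Fin p => a ≤ (j : ℕ) ∧ (j : ℕ) < b), f j := by
  rw [← Finset.sum_filter_add_sum_filter_not
    (Finset.univ.filter (fun j : Fin p => (j : ℕ) < b)) (fun j => (j : ℕ) < a),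
    Finset.filter_filter, Finset.filter_filter]
  congr 1
  · apply Finset.sum_congr _ fun _ _ => rfl
    ext j; simp only [Finset.mem_filter, Finset.mem_univ, true_and]; omega
  · apply Finset.sum_congr _ fun _ _ => rfl
    ext j; simp only [Finset.mem_filter, Finset.mem_univ, true_and]; omega

lemma vecMulVec_mulVec' (u v x : Fin p → ℝ) : (vecMulVec u v) *ᵥ x = (v ⬝ᵥ x) • u := by
  ext i
  simp only [mulVec, vecMulVec_apply, dotProduct, Pi.smul_apply, smul_eq_mul, Finset.sum_mul]
  exact Finset.sum_congr rfl fun j _ => by ring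

lemma sum_mulVec' {α} (s : Finset α) (A : α → Matrix (Fin p) (Fin p) ℝ) (x : Fin p → ℝ) :
    (∑ y ∈ s, A y) *ᵥ x = ∑ y ∈ s, A y *ᵥ x := by
  ext i
  simp only [mulVec, dotProduct, Matrix.sum_apply, Finset.sum_apply, Finset.sum_mul]
  exact Finset.sum_comm

lemma dotProduct_sum' {α} (s : Finset α) (x : Fin p → ℝ) (f : α → Fin p → ℝ) :
    x ⬝ᵥ (∑ y ∈ s, f y) = ∑ y ∈ s, x ⬝ᵥ f y := by
  simp only [dotProduct, Finset.sum_apply, Finset.mul_sum]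
  exact Finset.sum_comm

lemma quad_form_weighted (w : Fin h → ℝ) (u : Fin h → Fin p → ℝ) (x : Fin p → ℝ) :
    x ⬝ᵥ ((∑ y, w y • vecMulVec (u y) (u y)) *ᵥ x) = ∑ y, w y * (u y ⬝ᵥ x) ^ 2 := by
  rw [sum_mulVec', dotProduct_sum']
  apply Finset.sum_congr rfl; intro y _
  rw [smul_mulVec, vecMulVec_mulVec', dotProduct_smul, dotProduct_smul]
  rw [dotProduct_comm x (u y)]
  simp only [smul_eq_mul, sq]

lemma filter_lt_eq_map' {p m : ℕ} (hm : m ≤ p) :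
    (Finset.univ.filter fun j : Fin p => (j : ℕ) < m)
      = Finset.map ⟨Fin.castLE hm, Fin.castLE_injective hm⟩ Finset.univ := by
  ext j
  simp only [Finset.mem_filter, Finset.mem_map, Finset.mem_univ, true_and,
    Function.Embedding.coeFn_mk]
  constructor
  · intro hj; exact ⟨⟨j, hj⟩, by ext; rfl⟩
  · rintro ⟨i, rfl⟩; exact i.isLt

lemma sum_castLE (hm : m ≤ p) (lam : Fin p → ℝ) :
    ∑ i : Fin m, lam (Fin.castLE hm i)
      = ∑ j ∈ Finset.univ.filter (fun j : Fin p => (j : ℕ) < m), lam j := by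
  rw [filter_lt_eq_map' hm, Finset.sum_map]; rfl

lemma submatrix_orth (W : Matrix (Fin p) (Fin p) ℝ) (hW : Wᵀ * W = 1)
    (f : Fin m → Fin p) (hf : Function.Injective f) :
    (W.submatrix id f)ᵀ * W.submatrix id f = 1 := by
  rw [transpose_submatrix, ← Matrix.submatrix_mul _ _ _ (id : Fin p → Fin p) _
    Function.bijective_id, hW]
  ext i j
  simp [Matrix.submatrix_apply, Matrix.one_apply, hf.eq_iff]

lemma wt_submatrix (W : Matrix (Fin p) (Fin p) ℝ) (hW : Wᵀ * W = 1) (f : Fin m → Fin p) :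
    Wᵀ * W.submatrix id f = (1 : Matrix (Fin p) (Fin p) ℝ).submatrix id f := by
  rw [← hW]
  exact (Matrix.submatrix_mul Wᵀ W (id : Fin p → Fin p) (id : Fin p → Fin p) f
    Function.bijective_id)

lemma trace_conj_submatrix (W : Matrix (Fin p) (Fin p) ℝ) (hW : Wᵀ * W = 1)
    (lam : Fin p → ℝ) (f : Fin m → Fin p) :
    trace ((W.submatrix id f)ᵀ * (W * diagonal lam * Wᵀ) * W.submatrix id f)
      = ∑ i, lam (f i) := by
  set B := W.submatrix id f with hB
  set K := (1 : Matrix (Fin p) (Fin p) ℝ).submatrix id f with hK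
  have hWB : Wᵀ * B = K := wt_submatrix W hW f
  have hconj : Bᵀ * (W * diagonal lam * Wᵀ) * B = Kᵀ * (diagonal lam * K) := by
    rw [← hWB, transpose_mul, transpose_transpose]
    simp only [Matrix.mul_assoc]
  have key : ∀ i, (Kᵀ * (diagonal lam * K)) i i = lam (f i) := by
    intro i
    simp only [mul_apply, transpose_apply, diagonal_apply, hK, Matrix.submatrix_apply,
      Matrix.one_apply, id_eq, ite_mul, one_mul, zero_mul, mul_ite, mul_one, mul_zero]
    simp [Finset.sum_ite_eq, Finset.sum_ite_eq']
  rw [hconj, Matrix.trace]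
  simp only [diag_apply]
  exact Finset.sum_congr rfl fun i _ => key i

lemma psd_weighted (w : Fin h → ℝ) (hw : ∀ y, 0 ≤ w y) (u : Fin h → Fin p → ℝ) :
    PosSemidef (∑ y, w y • vecMulVec (u y) (u y)) := by
  rw [posSemidef_iff_dotProduct_mulVec]
  constructor
  · show _ᴴ = _
    rw [conjT_eq_transpose]
    ext i j
    simp only [transpose_apply, Matrix.sum_apply, Matrix.smul_apply, vecMulVec_apply,
      smul_eq_mul]
    exact Finset.sum_congr rfl fun y _ => by ring
  · intro x
    simp only [star_trivial]
    rw [quad_form_weighted]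
    exact Finset.sum_nonneg fun y _ => mul_nonneg (hw y) (sq_nonneg _)

lemma psd_Q (Q : Matrix (Fin p) (Fin p) ℝ) (hQs : Qᵀ = Q) (hQi : Q * Q = Q) :
    PosSemidef Q := by
  rw [posSemidef_iff_dotProduct_mulVec]
  constructor
  · show _ᴴ = _
    rw [conjT_eq_transpose, hQs]
  · intro x
    simp only [star_trivial]
    have h1 : x ⬝ᵥ Q *ᵥ x = (Q *ᵥ x) ⬝ᵥ (Q *ᵥ x) := by
      conv_lhs => rw [← hQi, ← Matrix.mulVec_mulVec]
      rw [dotProduct_mulVec, ← mulVec_transpose, hQs]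
    rw [h1]
    exact Finset.sum_nonneg fun i _ => mul_self_nonneg _

lemma mul_vecMulVec (Q : Matrix (Fin p) (Fin p) ℝ) (a b : Fin p → ℝ) :
    Q * vecMulVec a b = vecMulVec (Q *ᵥ a) b := by
  rw [vecMulVec_eq (ι := Unit), vecMulVec_eq (ι := Unit), replicateCol_mulVec, Matrix.mul_assoc]

lemma exists_witness {p h r : ℕ} (w : Fin h → ℝ) (hw : ∀ y, 0 ≤ w y)
    (z : Fin h → Fin p → ℝ) (Q : Matrix (Fin p) (Fin p) ℝ)
    (hQs : Qᵀ = Q) (hQi : Q * Q = Q) (hQr : Q.rank = p - r)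
    (lam : Fin p → ℝ) (V : Matrix (Fin p) (Fin p) ℝ) (hV : Vᵀ * V = 1) (hlam : Antitone lam)
    (hlam0 : ∀ j, 0 ≤ lam j)
    (hM : (∑ y, w y • vecMulVec (Q *ᵥ z y) (Q *ᵥ z y)) = V * diagonal lam * Vᵀ)
    (m : ℕ) (hm : m ≤ p - r) :
    ∃ B : Matrix (Fin p) (Fin m) ℝ, Bᵀ * B = 1 ∧ Q * B = B ∧
      trace (Bᵀ * (V * diagonal lam * Vᵀ) * B)
        = ∑ j ∈ Finset.univ.filter (fun j : Fin p => (j : ℕ) < m), lam j := by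
  have hm' : m ≤ p := hm.trans (Nat.sub_le p r)
  set Mw := ∑ y, w y • vecMulVec (Q *ᵥ z y) (Q *ᵥ z y) with hMw
  have hMpsd : PosSemidef Mw := psd_weighted w hw _
  have hQpsd : PosSemidef Q := psd_Q Q hQs hQi
  have hQMw : Q * Mw = Mw := by
    rw [hMw, Matrix.mul_sum]
    apply Finset.sum_congr rfl; intro y _
    rw [Matrix.mul_smul, mul_vecMulVec, Matrix.mulVec_mulVec, hQi]
  set A := Mw + Q with hA
  have hApsd : PosSemidef A := hMpsd.add hQpsd
  have hAherm := hApsd.1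
  set μ := hAherm.eigenvalues with hμdef
  set U := (IsHermitian.eigenvectorUnitary hAherm : Matrix (Fin p) (Fin p) ℝ) with hUdef
  have hUU : U * Uᵀ = 1 := by
    have h2 := (Matrix.mem_unitaryGroup_iff).mp (IsHermitian.eigenvectorUnitary hAherm).2
    rwa [Matrix.star_eq_conjTranspose, conjT_eq_transpose] at h2
  have hUo : Uᵀ * U = 1 := mul_eq_one_comm.mp hUU
  have hspec : A = U * diagonal μ * Uᵀ := by
    have hsp := hAherm.spectral_theorem
    rwa [Unitary.conjStarAlgAut_apply, Matrix.star_eq_conjTranspose, conjT_eq_transpose,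
      show (RCLike.ofReal ∘ μ : Fin p → ℝ) = μ from funext fun i => rfl] at hsp
  have hAU : A * U = U * diagonal μ := by
    rw [hspec, Matrix.mul_assoc (U * diagonal μ) Uᵀ U, hUo, Matrix.mul_one]
  have hcol : ∀ i, A *ᵥ (fun k => U k i) = μ i • (fun k => U k i) := by
    intro i; funext k
    have h1 : (A * U) k i = (U * diagonal μ) k i := by rw [hAU]
    rw [mul_apply, mul_diagonal] at h1
    show ∑ j, A k j * U j i = μ i * U k i
    rw [h1]; ring
  have hker : ∀ x : Fin p → ℝ, A *ᵥ x = 0 → Q *ᵥ x = 0 ∧ Mw *ᵥ x = 0 := by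
    intro x hx
    have hsum : x ⬝ᵥ (Mw *ᵥ x) + x ⬝ᵥ (Q *ᵥ x) = 0 := by
      rw [← dotProduct_add, ← add_mulVec, ← hA, hx, dotProduct_zero]
    have h1 : 0 ≤ x ⬝ᵥ (Mw *ᵥ x) := by simpa using hMpsd.dotProduct_mulVec_nonneg x
    have h2 : 0 ≤ x ⬝ᵥ (Q *ᵥ x) := by simpa using hQpsd.dotProduct_mulVec_nonneg x
    constructor
    · exact (hQpsd.dotProduct_mulVec_zero_iff x).mp (by simpa using by linarith)
    · exact (hMpsd.dotProduct_mulVec_zero_iff x).mp (by simpa using by linarith)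
  have hμ0 : ∀ i, 0 ≤ μ i := fun i => hApsd.eigenvalues_nonneg i
  have hcolunit : ∀ i, (fun k => U k i) ⬝ᵥ (fun k => U k i) = 1 := by
    intro i
    have h1 : (Uᵀ * U) i i = (1 : Matrix (Fin p) (Fin p) ℝ) i i := by rw [hUo]
    simpa [mul_apply, one_apply, dotProduct] using h1
  have hQA : Q * A = A := by rw [hA, Matrix.mul_add, hQMw, hQi]
  have hQcol : ∀ i, μ i ≠ 0 → Q *ᵥ (fun k => U k i) = (fun k => U k i) := by
    intro i hne
    have h1 : Q *ᵥ (μ i • (fun k => U k i)) = μ i • (fun k => U k i) := by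
      rw [← hcol i, Matrix.mulVec_mulVec, hQA]
    rw [mulVec_smul] at h1
    exact smul_right_injective _ hne h1
  set ν : Fin p → ℝ := fun i => if μ i = 0 then 0 else μ i - 1 with hνdef
  have hMwcol : ∀ i, Mw *ᵥ (fun k => U k i) = ν i • (fun k => U k i) := by
    intro i
    by_cases hz0 : μ i = 0
    · have hA0 : A *ᵥ (fun k => U k i) = 0 := by rw [hcol i, hz0, zero_smul]
      have h2 := (hker _ hA0).2
      rw [h2]
      simp [hνdef, hz0]
    · have hQc := hQcol i hz0
      have hsub : Mw *ᵥ (fun k => U k i) = A *ᵥ (fun k => U k i) - Q *ᵥ (fun k => U k i) := by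
        rw [hA, add_mulVec]; abel
      rw [hsub, hcol i, hQc]
      simp only [hνdef, if_neg hz0, sub_smul, one_smul]
  have hν0 : ∀ i, 0 ≤ ν i := by
    intro i
    have h2 : 0 ≤ (fun k => U k i) ⬝ᵥ (Mw *ᵥ (fun k => U k i)) := by simpa using hMpsd.dotProduct_mulVec_nonneg _
    rw [hMwcol i, dotProduct_smul, hcolunit i] at h2
    simpa using h2
  have hμ1 : ∀ i, μ i ≠ 0 → 1 ≤ μ i := by
    intro i hne
    have := hν0 i
    rw [hνdef] at this
    simp only [if_neg hne] at this
    linarith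
  have hrank : p - r ≤ A.rank := by
    rw [← hQr]
    refine rank_le_of_ker_le A Q fun x hx => ?_
    rw [LinearMap.mem_ker, Matrix.mulVecLin_apply] at hx ⊢
    exact (hker x hx).1
  have hcard : p - r ≤ Fintype.card {i : Fin p // μ i ≠ 0} := by
    rw [← hAherm.rank_eq_card_non_zero_eigs]; exact hrank
  set σ : Equiv.Perm (Fin p) := Fin.revPerm.trans (Tuple.sort μ) with hσdef
  have hμσ : Antitone (μ ∘ σ) := by
    intro a b hab
    exact Tuple.monotone_sort μ (Fin.rev_le_rev.mpr hab)
  have hνmono : ∀ i j, μ i ≤ μ j → ν i ≤ ν j := by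
    intro i j hij
    by_cases hi : μ i = 0
    · rw [hνdef]; simp only [if_pos hi]; exact hν0 j
    · have hj : μ j ≠ 0 := by
        intro hj0
        have h3 := hμ1 i hi
        rw [hj0] at hij
        linarith
      rw [hνdef]; simp only [if_neg hi, if_neg hj]; linarith
  have hνσ : Antitone (ν ∘ σ) := fun a b hab => hνmono _ _ (hμσ hab)
  have hνσ0 : ∀ j, 0 ≤ (ν ∘ σ) j := fun j => hν0 _
  have htop : ∀ j : Fin p, (j : ℕ) < p - r → μ (σ j) ≠ 0 := by
    intro j hj hzero
    have hallz : ∀ k : Fin p, j ≤ k → μ (σ k) = 0 := by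
      intro k hk
      have h4 : (μ ∘ σ) k ≤ (μ ∘ σ) j := hμσ hk
      have h5 := hμ0 (σ k)
      simp only [Function.comp_apply] at h4
      rw [hzero] at h4
      linarith
    have hlt : ∀ i : {i : Fin p // μ i ≠ 0}, ((σ.symm i.1 : Fin p) : ℕ) < (j : ℕ) := by
      intro i
      by_contra hge
      push_neg at hge
      apply i.2
      have h6 := hallz (σ.symm i.1) (Fin.le_def.mpr hge)
      simpa using h6
    have hinj : Function.Injective (fun i : {i : Fin p // μ i ≠ 0} =>
        (⟨σ.symm i.1, hlt i⟩ : {k : Fin p // (k : ℕ) < (j : ℕ)})) := by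
      intro a b hab
      have := congrArg (fun x => σ (x.1)) hab
      simpa [Subtype.ext_iff] using this
    have hc2 := Fintype.card_le_of_injective _ hinj
    have hc3 : Fintype.card {k : Fin p // (k : ℕ) < (j : ℕ)} = (j : ℕ) := by
      rw [Fintype.card_subtype]
      exact filter_lt_card j.isLt.le
    omega
  -- the witness matrix
  set V₂ : Matrix (Fin p) (Fin p) ℝ := U.submatrix id σ with hV₂def
  set B : Matrix (Fin p) (Fin m) ℝ := V₂.submatrix id (Fin.castLE hm') with hBdef
  have hV₂o : V₂ᵀ * V₂ = 1 := submatrix_orth U hUo σ σ.injective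
  have hBo : Bᵀ * B = 1 := by
    rw [hBdef, hV₂def, Matrix.submatrix_submatrix]
    exact submatrix_orth U hUo _ (σ.injective.comp (Fin.castLE_injective hm'))
  have hQB : Q * B = B := by
    ext k i
    have hμne : μ (σ (Fin.castLE hm' i)) ≠ 0 := by
      apply htop
      simp only [Fin.coe_castLE]
      exact lt_of_lt_of_le i.isLt hm
    have hci := congrFun (hQcol (σ (Fin.castLE hm' i)) hμne) k
    simp only [mulVec, dotProduct] at hci
    simp only [hBdef, hV₂def, mul_apply, Matrix.submatrix_submatrix, Matrix.submatrix_apply,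
      id_eq, Function.comp_apply]
    exact hci
  have hMV₂ : Mw * V₂ = V₂ * diagonal (ν ∘ σ) := by
    ext k i
    have hmc := congrFun (hMwcol (σ i)) k
    simp only [mulVec, dotProduct, Pi.smul_apply, smul_eq_mul] at hmc
    rw [Matrix.mul_diagonal]
    simp only [hV₂def, mul_apply, Matrix.submatrix_apply, id_eq, Function.comp_apply]
    rw [hmc, mul_comm]
  have hV₂V₂ : V₂ * V₂ᵀ = 1 := mul_eq_one_comm.mp hV₂o
  have hM2 : Mw = V₂ * diagonal (ν ∘ σ) * V₂ᵀ := by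
    calc Mw = Mw * (V₂ * V₂ᵀ) := by rw [hV₂V₂, Matrix.mul_one]
      _ = (Mw * V₂) * V₂ᵀ := by rw [Matrix.mul_assoc]
      _ = V₂ * diagonal (ν ∘ σ) * V₂ᵀ := by rw [hMV₂]
  have htr1 : trace (Bᵀ * Mw * B) = ∑ j ∈ Finset.univ.filter
      (fun j : Fin p => (j : ℕ) < m), (ν ∘ σ) j := by
    rw [hBdef, hM2, trace_conj_submatrix V₂ hV₂o (ν ∘ σ) (Fin.castLE hm'),
      sum_castLE hm']
  have htr2 : trace (Bᵀ * Mw * B) ≤ ∑ j ∈ Finset.univ.filter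
      (fun j : Fin p => (j : ℕ) < m), lam j := by
    rw [hM]
    exact kyFan hm' lam hlam hlam0 V hV B hBo
  have hBvo : (V.submatrix id (Fin.castLE hm'))ᵀ * V.submatrix id (Fin.castLE hm') = 1 :=
    submatrix_orth V hV _ (Fin.castLE_injective hm')
  have htr3 : ∑ j ∈ Finset.univ.filter (fun j : Fin p => (j : ℕ) < m), lam j
      = trace ((V.submatrix id (Fin.castLE hm'))ᵀ * Mw * V.submatrix id (Fin.castLE hm')) := by
    rw [hM, trace_conj_submatrix V hV lam (Fin.castLE hm'), sum_castLE hm']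
  have htr4 : trace ((V.submatrix id (Fin.castLE hm'))ᵀ * Mw * V.submatrix id (Fin.castLE hm'))
      ≤ ∑ j ∈ Finset.univ.filter (fun j : Fin p => (j : ℕ) < m), (ν ∘ σ) j := by
    rw [hM2]
    exact kyFan hm' (ν ∘ σ) hνσ hνσ0 V₂ hV₂o _ hBvo
  refine ⟨B, hBo, hQB, ?_⟩
  rw [← hM, htr1]
  have hle1 : ∑ j ∈ Finset.univ.filter (fun j : Fin p => (j : ℕ) < m), (ν ∘ σ) j
      ≤ ∑ j ∈ Finset.univ.filter (fun j : Fin p => (j : ℕ) < m), lam j := htr1 ▸ htr2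
  have hle2 : ∑ j ∈ Finset.univ.filter (fun j : Fin p => (j : ℕ) < m), lam j
      ≤ ∑ j ∈ Finset.univ.filter (fun j : Fin p => (j : ℕ) < m), (ν ∘ σ) j := htr3 ▸ htr4
  linarith

lemma trace_weighted (w : Fin h → ℝ) (u : Fin h → Fin p → ℝ) :
    trace (∑ y, w y • vecMulVec (u y) (u y)) = ∑ y, w y * (u y ⬝ᵥ u y) := by
  rw [trace_sum]
  exact Finset.sum_congr rfl fun y _ => by rw [trace_smul, trace_vecMulVec', smul_eq_mul]

lemma value_eq (w : Fin h → ℝ) (u : Fin h → Fin p → ℝ)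
    (B : Matrix (Fin p) (Fin m) ℝ) (hB : Bᵀ * B = 1) (C : Fin h → Fin m → ℝ) :
    ∑ y, w y * ∑ j, (u y j - (B *ᵥ C y) j) ^ 2
      = (trace (∑ y, w y • vecMulVec (u y) (u y))
        - trace (Bᵀ * (∑ y, w y • vecMulVec (u y) (u y)) * B))
        + ∑ y, w y * ((Bᵀ *ᵥ u y - C y) ⬝ᵥ (Bᵀ *ᵥ u y - C y)) := by
  rw [trace_weighted, ← quad_trace]
  have hpt : ∀ y, w y * ∑ j, (u y j - (B *ᵥ C y) j) ^ 2
      = w y * (u y ⬝ᵥ u y) - w y * ((Bᵀ *ᵥ u y) ⬝ᵥ (Bᵀ *ᵥ u y))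
        + w y * ((Bᵀ *ᵥ u y - C y) ⬝ᵥ (Bᵀ *ᵥ u y - C y)) := by
    intro y; rw [pyth B hB (u y) (C y)]; ring
  rw [Finset.sum_congr rfl fun y _ => hpt y, Finset.sum_add_distrib, Finset.sum_sub_distrib]

lemma tail_zero {p r : ℕ} (lam : Fin p → ℝ) (hlam : Antitone lam) (hlam0 : ∀ j, 0 ≤ lam j)
    (hcard : Fintype.card {i : Fin p // lam i ≠ 0} ≤ p - r) :
    ∀ j : Fin p, p - r ≤ (j : ℕ) → lam j = 0 := by
  intro j hj
  by_contra hne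
  have hpos : 0 < lam j := lt_of_le_of_ne (hlam0 j) (Ne.symm hne)
  have hlt : ∀ k : {k : Fin p // (k : ℕ) < (j : ℕ) + 1}, lam k.1 ≠ 0 := by
    intro k
    have : lam j ≤ lam k.1 := hlam (Fin.le_def.mpr (Nat.lt_succ_iff.mp k.2))
    intro h0; rw [h0] at this; linarith
  have hinj : Function.Injective (fun k : {k : Fin p // (k : ℕ) < (j : ℕ) + 1} =>
      (⟨k.1, hlt k⟩ : {i : Fin p // lam i ≠ 0})) := by
    intro a b hab
    simpa [Subtype.ext_iff] using hab
  have hc := Fintype.card_le_of_injective _ hinj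
  have hc3 : Fintype.card {k : Fin p // (k : ℕ) < (j : ℕ) + 1} = (j : ℕ) + 1 := by
    rw [Fintype.card_subtype]; exact filter_lt_card j.isLt
  have hc4 : Fintype.card {i : Fin p // lam i ≠ 0} ≥ (j : ℕ) + 1 := by omega
  omega


/-- Let `z_1,…,z_h ∈ ℝ^p`, weights `w_y > 0` with `Σ w_y z_y = 0`,
`M = Σ w_y z_y z_yᵀ`, and let `Q` be a real symmetric idempotent p×p matrix of rank `p - r`.
Let `lam'_1 ≥ … ≥ lam'_p` be the eigenvalues of `Q M Q` (encoded through an orthogonal `V`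
with `Q M Q = V (diag lam') Vᵀ`).  Then `lam'_j = 0` for all `j > p - r`, and for every
`m ≤ p - r` the minimum of `Σ_y w_y ‖Q z_y - B C_y‖²` over `p×m` matrices `B` with
`BᵀB = I_m` and `Q B = B` and all `C : Fin h → ℝ^m` equals `Σ_{m < j ≤ p-r} lam'_j`; it is
attained at `C_y = Bᵀ Q z_y` with the columns of `B` the unit eigenvectors of `Q M Q`
corresponding to `lam'_1,…,lam'_m` (the first `m` columns of `V`). -/
theorem stmt_7 {p h r : ℕ}
    (z : Fin h → Fin p → ℝ) (w : Fin h → ℝ) (hw : ∀ y, 0 < w y)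
    (hz : ∑ y, w y • z y = 0)
    (Q : Matrix (Fin p) (Fin p) ℝ)
    (hQs : Qᵀ = Q) (hQi : Q * Q = Q) (hQr : Q.rank = p - r)
    (lam' : Fin p → ℝ) (V : Matrix (Fin p) (Fin p) ℝ)
    (hV : Vᵀ * V = 1) (hlam' : Antitone lam')
    (hQMQ : Q * (∑ y, w y • vecMulVec (z y) (z y)) * Q
      = V * Matrix.diagonal lam' * Vᵀ) :
    (∀ j : Fin p, p - r ≤ (j : ℕ) → lam' j = 0) ∧
    ∀ m : ℕ, ∀ hm : m ≤ p - r,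
      IsLeast
        {v : ℝ | ∃ (B : Matrix (Fin p) (Fin m) ℝ) (C : Fin h → Fin m → ℝ),
          Bᵀ * B = 1 ∧ Q * B = B ∧
          v = ∑ y, w y * ∑ j, (Q.mulVec (z y) j - B.mulVec (C y) j) ^ 2}
        (∑ j ∈ Finset.univ.filter
            fun j : Fin p => m ≤ (j : ℕ) ∧ (j : ℕ) < p - r, lam' j) ∧
      (∑ y, w y * ∑ j,
          (Q.mulVec (z y) j
            - (V.submatrix id (Fin.castLE (hm.trans (Nat.sub_le p r)))).mulVec
                ((V.submatrix id (Fin.castLE (hm.trans (Nat.sub_le p r))))ᵀ.mulVec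
                  (Q.mulVec (z y))) j) ^ 2)
        = ∑ j ∈ Finset.univ.filter
            fun j : Fin p => m ≤ (j : ℕ) ∧ (j : ℕ) < p - r, lam' j := by
  have hw' : ∀ y, 0 ≤ w y := fun y => (hw y).le
  set u : Fin h → Fin p → ℝ := fun y => Q *ᵥ z y with hudef
  set Mw : Matrix (Fin p) (Fin p) ℝ := ∑ y, w y • vecMulVec (u y) (u y) with hMwdef
  -- Mw = Q M Q = V D Vᵀ
  have hM : Mw = V * diagonal lam' * Vᵀ := by
    rw [← hQMQ, hMwdef, Matrix.mul_sum, Matrix.sum_mul]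
    apply Finset.sum_congr rfl; intro y _
    rw [Matrix.mul_smul, Matrix.smul_mul, hudef]
    rw [vecMulVec_mulVec_conj, hQs]
  have hMpsd : PosSemidef Mw := psd_weighted w hw' u
  -- diagonal lam' = Vᵀ Mw V
  have hD : Vᵀ * Mw * V = diagonal lam' := by
    rw [hM]
    calc Vᵀ * (V * diagonal lam' * Vᵀ) * V
        = (Vᵀ * V) * diagonal lam' * (Vᵀ * V) := by simp only [Matrix.mul_assoc]
      _ = diagonal lam' := by rw [hV, Matrix.one_mul, Matrix.mul_one]
  -- nonnegativity of lam'
  have hlam0 : ∀ j, 0 ≤ lam' j := by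
    intro j
    have hq : (Vᵀ * (Mw * V)) j j = (fun k => V k j) ⬝ᵥ (Mw *ᵥ (fun k => V k j)) := by
      simp only [mul_apply, transpose_apply, mulVec, dotProduct, Finset.mul_sum]
    have hd : lam' j = (Vᵀ * (Mw * V)) j j := by
      rw [← Matrix.mul_assoc, hD, diagonal_apply_eq]
    rw [hd, hq]
    simpa using hMpsd.dotProduct_mulVec_nonneg (fun k => V k j)
  -- rank bound and part 1
  have hr1 : (V * diagonal lam' * Vᵀ).rank ≤ p - r := by
    rw [← hQMQ, ← hQr]
    calc (Q * (∑ y, w y • vecMulVec (z y) (z y)) * Q).rank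
        ≤ (Q * (∑ y, w y • vecMulVec (z y) (z y))).rank := Matrix.rank_mul_le_left _ _
      _ ≤ Q.rank := Matrix.rank_mul_le_left _ _
  have hr2 : (diagonal lam').rank ≤ (V * diagonal lam' * Vᵀ).rank := by
    have hid : diagonal lam' = Vᵀ * (V * diagonal lam' * Vᵀ) * V := by rw [← hM]; rw [hD]
    calc (diagonal lam').rank = (Vᵀ * (V * diagonal lam' * Vᵀ) * V).rank := by rw [← hid]
      _ ≤ (Vᵀ * (V * diagonal lam' * Vᵀ)).rank := Matrix.rank_mul_le_left _ _
      _ ≤ (V * diagonal lam' * Vᵀ).rank := Matrix.rank_mul_le_right _ _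
  have hcard : Fintype.card {i : Fin p // lam' i ≠ 0} ≤ p - r := by
    rw [← Matrix.rank_diagonal lam']
    exact le_trans hr2 hr1
  have part1 : ∀ j : Fin p, p - r ≤ (j : ℕ) → lam' j = 0 :=
    tail_zero lam' hlam' hlam0 hcard
  refine ⟨part1, ?_⟩
  intro m hm
  have hm' : m ≤ p := hm.trans (Nat.sub_le p r)
  -- trace of Mw
  have htraceMw : trace Mw = ∑ j, lam' j := by
    rw [hM, Matrix.trace_mul_cycle, hV, Matrix.one_mul, trace_diagonal]
  have hTall : ∑ j, lam' j
      = ∑ j ∈ Finset.univ.filter (fun j : Fin p => (j : ℕ) < p - r), lam' j := by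
    rw [← Finset.sum_filter_add_sum_filter_not Finset.univ
      (fun j : Fin p => (j : ℕ) < p - r) lam']
    have hz0 : ∑ j ∈ Finset.univ.filter (fun j : Fin p => ¬ (j : ℕ) < p - r), lam' j = 0 :=
      Finset.sum_eq_zero fun j hj =>
        part1 j (Nat.le_of_not_lt (Finset.mem_filter.mp hj).2)
    rw [hz0, add_zero]
  have hsplit2 : ∑ j ∈ Finset.univ.filter (fun j : Fin p => (j : ℕ) < p - r), lam' j
      = (∑ j ∈ Finset.univ.filter (fun j : Fin p => (j : ℕ) < m), lam' j)
        + ∑ j ∈ Finset.univ.filter (fun j : Fin p => m ≤ (j : ℕ) ∧ (j : ℕ) < p - r), lam' j :=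
    sum_split hm lam'
  -- generic value computation for B with extra trace info and C := Bᵀ u
  have hval : ∀ (B : Matrix (Fin p) (Fin m) ℝ), Bᵀ * B = 1 →
      trace (Bᵀ * Mw * B) = ∑ j ∈ Finset.univ.filter (fun j : Fin p => (j : ℕ) < m), lam' j →
      ∑ y, w y * ∑ j, (u y j - (B *ᵥ (Bᵀ *ᵥ u y)) j) ^ 2
        = ∑ j ∈ Finset.univ.filter
            (fun j : Fin p => m ≤ (j : ℕ) ∧ (j : ℕ) < p - r), lam' j := by
    intro B hB htr
    rw [value_eq w u B hB (fun y => Bᵀ *ᵥ u y)]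
    rw [← hMwdef, htraceMw, hTall, htr]
    have hzero : ∑ y, w y * ((Bᵀ *ᵥ u y - Bᵀ *ᵥ u y) ⬝ᵥ (Bᵀ *ᵥ u y - Bᵀ *ᵥ u y)) = 0 := by
      apply Finset.sum_eq_zero; intro y _; simp
    rw [hzero, hsplit2]
    ring
  constructor
  · constructor
    · -- membership
      obtain ⟨B, hBo, hQB, htr⟩ := exists_witness w hw' z Q hQs hQi hQr lam' V hV hlam' hlam0
        hM m hm
      refine ⟨B, fun y => Bᵀ *ᵥ u y, hBo, hQB, ?_⟩
      exact (hval B hBo (by rw [hM]; exact htr)).symm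
    · -- lower bound
      rintro v ⟨B, C, hB, hQB2, rfl⟩
      have hkf : trace (Bᵀ * Mw * B)
          ≤ ∑ j ∈ Finset.univ.filter (fun j : Fin p => (j : ℕ) < m), lam' j := by
        rw [hM]
        exact kyFan hm' lam' hlam' hlam0 V hV B hB
      have hR : 0 ≤ ∑ y, w y * ((Bᵀ *ᵥ u y - C y) ⬝ᵥ (Bᵀ *ᵥ u y - C y)) := by
        apply Finset.sum_nonneg; intro y _
        apply mul_nonneg (hw' y)
        exact Finset.sum_nonneg fun i _ => mul_self_nonneg _
      have hveq := value_eq w u B hB C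
      rw [← hMwdef] at hveq
      rw [hveq, htraceMw, hTall, hsplit2]
      linarith
  · -- explicit minimiser
    set Bv := V.submatrix id (Fin.castLE (hm.trans (Nat.sub_le p r))) with hBvdef
    have hBvo : Bvᵀ * Bv = 1 :=
      submatrix_orth V hV _ (Fin.castLE_injective _)
    have htrv : trace (Bvᵀ * Mw * Bv)
        = ∑ j ∈ Finset.univ.filter (fun j : Fin p => (j : ℕ) < m), lam' j := by
      rw [hM, hBvdef, trace_conj_submatrix V hV lam' _, sum_castLE hm']
    exact hval Bv hBvo htrv
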